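/- arXiv:2505.19646 — 3 statements merged into one kernel-verified Lean document; each statement's English description precedes it below -/
import Mathlib

section
/- For the conditional OT path with backward kernel p_{t|r}(x_t|x_r) = N(x_t; (t/r)x_r, σ_t I) where σ_t = (1−t)² − (t²/r²)(1−r)², and conditional velocity u_{t|r}(x_t|x_r) = (1/r)x_r + (σ̇_t/(2σ_t))(x_t − (t/r)x_r), the marginal consistency holds: E_{x_r ∼ p_{r|1,t}(·|x₁,x_t)}[u_{t|r}(x_t|x_r)] = (x₁ − x_t)/(1−t) = u_{t|1}(x_t|x₁), where p_{r|1,t} is the Gaussian posterior with mean μ_{r|1,t}(x₁,x_t) = (t(1−r)²/(r(1−t)²)) x_t + (rσ_t/(1−t)²) x₁. -/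
open MeasureTheory

/-- For the conditional OT path with backward kernel
`p_{t|r}(x_t|x_r) = N(x_t; (t/r)x_r, σ_t I)` and conditional velocity
`u_{t|r}(x_t|x_r) = (1/r)x_r + (σ̇_t/(2σ_t))(x_t − (t/r)x_r)`, the posterior expectation of
the conditional velocity recovers the conditional OT velocity:
`E_{x_r ∼ p_{r|1,t}(·|x₁,x_t)}[u_{t|r}(x_t|x_r)] = (x₁ − x_t)/(1−t)`, where the Gaussian
posterior has mean `μ_{r|1,t}(x₁,x_t) = (t(1−r)²/(r(1−t)²)) x_t + (rσ_t/(1−t)²) x₁`. -/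
theorem condOT_velocity_marginal_consistency
    (d : ℕ) (t r : ℝ) (ht : 0 < t) (htr : t < r) (hr : r < 1)
    (x₁ x_t : Fin d → ℝ)
    (σ σ' : ℝ)
    (hσ : σ = (1 - t) ^ 2 - (t ^ 2 / r ^ 2) * (1 - r) ^ 2)
    (hσ' : σ' = -2 * (1 - t) - (2 * t / r ^ 2) * (1 - r) ^ 2)
    (hσpos : 0 < σ)
    -- the Gaussian posterior p_{r|1,t}(·|x₁,x_t), given as a probability measure with the
    -- stated mean
    (P : Measure (Fin d → ℝ)) [IsProbabilityMeasure P]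
    (hPint : Integrable (fun x_r : Fin d → ℝ => x_r) P)
    (hPmean : ∫ x_r, x_r ∂P =
      (t * (1 - r) ^ 2 / (r * (1 - t) ^ 2)) • x_t + (r * σ / (1 - t) ^ 2) • x₁) :
    ∫ x_r, ((1 / r) • x_r + (σ' / (2 * σ)) • (x_t - (t / r) • x_r)) ∂P =
      (1 / (1 - t)) • (x₁ - x_t) := by

  have hr0 : r ≠ 0 := by nlinarith
  have h1t : (1:ℝ) - t ≠ 0 := by nlinarith
  have ht0 : t ≠ 0 := ne_of_gt ht
  have hσ0 : σ ≠ 0 := ne_of_gt hσpos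
  have h1 : 2*σ - σ'*t = 2*(1-t) := by
    subst hσ hσ'; field_simp; ring
  have hσe : t^2*(1-r)^2 = r^2*((1-t)^2 - σ) := by subst hσ; field_simp; ring
  have key3 : (1/r - (σ'/(2*σ))*(t/r)) * (r*σ/(1-t)^2) = 1/(1-t) := by
    field_simp
    linear_combination h1
  have key2 : (1/r - (σ'/(2*σ))*(t/r)) * (t*(1-r)^2/(r*(1-t)^2)) + σ'/(2*σ) = -(1/(1-t)) := by
    have key2t : t * ((1/r - (σ'/(2*σ))*(t/r)) * (t*(1-r)^2/(r*(1-t)^2)) + σ'/(2*σ))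
        = t * (-(1/(1-t))) := by
      field_simp
      refine mul_left_cancel₀ ht0 ?_
      linear_combination (t^2*(1-r)^2 - r^2*(1-t)^2) * h1 + 2*(1-t) * hσe
    exact mul_left_cancel₀ ht0 key2t
  have hint1 : Integrable (fun x_r : Fin d → ℝ => (1/r) • x_r) P := by
    exact hPint.smul (1/r)
  have hint3 : Integrable (fun x_r : Fin d → ℝ => (t/r) • x_r) P := by
    exact hPint.smul (t/r)
  have hint2 : Integrable (fun x_r : Fin d → ℝ => (σ'/(2*σ)) • (x_t - (t/r) • x_r)) P := by
    exact ((integrable_const x_t).sub hint3).smul (σ'/(2*σ))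
  rw [integral_add hint1 hint2, integral_smul, integral_smul,
    integral_sub (integrable_const x_t) hint3, integral_smul,
    integral_const, hPmean]
  simp only [measure_univ, probReal_univ, ENNReal.toReal_one, one_smul]
  funext i
  simp only [Pi.add_apply, Pi.smul_apply, Pi.sub_apply, smul_eq_mul]
  linear_combination (x_t i) * key2 + (x₁ i) * key3
end

section
/- For the masked diffusion path on a finite set S with mask token M, with conditional probability path p_{t|1}(x|x₁) = κ_t δ_{x₁}(x) + (1−κ_t)δ_M(x) and backward kernel p_{t|r}(x_t|x_r) = (κ_t/κ_r)δ_{x_r}(x_t) + (1−κ_t/κ_r)δ_M(x_t), the conditional rate matrices u_{t|r}(y,x|x_r) = (κ̇_t/(κ_r−κ_t))(δ_{x_r}(y) − δ_x(y)) satisfy the marginal consistency: for any x₁ ≠ M and any x_t in the support of p_{t|1}(·|x₁), E_{x_r ∼ p_{r|1,t}(·|x₁,x_t)}[u_{t|r}(y, x_t|x_r)] = (κ̇_t/(1−κ_t))(δ_{x₁}(y) − δ_{x_t}(y)) = u_{t|1}(y, x_t|x₁) for all y ∈ S, where p_{r|1,t}(x_r|x₁,x_t) = p_{t|r}(x_t|x_r)p_{r|1}(x_r|x₁)/p_{t|1}(x_t|x₁).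 -/
/-- Kronecker delta `δ_a(b)`. -/
def kdelta {S : Type*} [DecidableEq S] (a b : S) : ℝ := if b = a then 1 else 0

/-- Masked diffusion kernel `p_{t|r}(x_t|x_r) = (κ_t/κ_r)δ_{x_r}(x_t) +
(1 − κ_t/κ_r)δ_M(x_t)` (with `κ_1 = 1` this includes `p_{t|1}` and `p_{r|1}`). -/
noncomputable def maskedKernel {S : Type*} [DecidableEq S] (M : S) (κ : ℝ → ℝ)
    (t r : ℝ) (x_t x_r : S) : ℝ :=
  (κ t / κ r) * kdelta x_r x_t + (1 - κ t / κ r) * kdelta M x_t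

/-- marginal consistency of the masked-diffusion conditional rate matrices
`u_{t|r}(y,x|x_r) = (κ̇_t/(κ_r−κ_t))(δ_{x_r}(y) − δ_x(y))`: for any `x₁ ≠ M` and `x_t` in the
support of `p_{t|1}(·|x₁)`, the expectation of `u_{t|r}(y, x_t|·)` under the posterior
`p_{r|1,t}(x_r|x₁,x_t) = p_{t|r}(x_t|x_r)p_{r|1}(x_r|x₁)/p_{t|1}(x_t|x₁)` equals
`u_{t|1}(y, x_t|x₁) = (κ̇_t/(1−κ_t))(δ_{x₁}(y) − δ_{x_t}(y))`. -/
theorem masked_rate_marginal_consistency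
    {S : Type*} [Fintype S] [DecidableEq S] (M : S)
    (κ κ' : ℝ → ℝ) (hderiv : ∀ u, HasDerivAt κ (κ' u) u)
    (hκ_mono : MonotoneOn κ (Set.Icc 0 1))
    (hκ0 : κ 0 = 0) (hκ1 : κ 1 = 1)
    (t r : ℝ) (ht : 0 ≤ t) (htr : t < r) (hr1 : r ≤ 1)
    (hκtr : κ t < κ r) (hκt1 : κ t < 1)
    (x₁ : S) (hx₁ : x₁ ≠ M)
    (x_t : S) (hsupp : 0 < maskedKernel M κ t 1 x_t x₁) :
    ∀ y : S,
      ∑ x_r : S,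
          (maskedKernel M κ t r x_t x_r * maskedKernel M κ r 1 x_r x₁ /
              maskedKernel M κ t 1 x_t x₁) *
            ((κ' t / (κ r - κ t)) * (kdelta x_r y - kdelta x_t y)) =
        (κ' t / (1 - κ t)) * (kdelta x₁ y - kdelta x_t y) := by
  intro y
  have ht1 : t ≤ 1 := le_trans (le_of_lt htr) hr1
  have hκt0 : 0 ≤ κ t := by
    have := hκ_mono (Set.mem_Icc.mpr ⟨le_refl 0, zero_le_one⟩)
      (Set.mem_Icc.mpr ⟨ht, ht1⟩) ht
    rwa [hκ0] at this
  have hκr0 : 0 < κ r := lt_of_le_of_lt hκt0 hκtr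
  have hκrne : κ r ≠ 0 := ne_of_gt hκr0
  have hκrt : κ r - κ t ≠ 0 := sub_ne_zero_of_ne (ne_of_gt hκtr)
  have h1t : (1 : ℝ) - κ t ≠ 0 := sub_ne_zero_of_ne (ne_of_gt hκt1)
  have hMx₁ : M ≠ x₁ := Ne.symm hx₁
  have hxtc : x_t = x₁ ∨ x_t = M := by
    by_contra h
    push_neg at h
    simp [maskedKernel, kdelta, hκ1, h.1, h.2] at hsupp
  have hsum : ∀ f : S → ℝ, (∀ x, x ≠ x₁ → x ≠ M → f x = 0) →
      ∑ x : S, f x = f x₁ + f M := by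
    intro f hf
    rw [← Finset.sum_subset (Finset.subset_univ {x₁, M})]
    · rw [Finset.sum_pair hx₁]
    · intro x _ hx
      simp only [Finset.mem_insert, Finset.mem_singleton] at hx
      push_neg at hx
      exact hf x hx.1 hx.2
  rw [hsum _ (by
    intro x hx1 hxM
    simp [maskedKernel, kdelta, hκ1, hx1, hxM])]
  rcases hxtc with h | h
  · subst h
    have hκtpos : 0 < κ t := by
      simpa [maskedKernel, kdelta, hκ1, hx₁, hMx₁] using hsupp
    simp [maskedKernel, kdelta, hκ1, hx₁, hMx₁, sub_self]
  · subst h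
    simp only [maskedKernel, kdelta, hκ1, if_pos rfl, if_neg hx₁, if_neg hMx₁,
      div_one, if_true]
    field_simp
    have h1t' : (1 - κ t)⁻¹ * (1 - κ t) = 1 := inv_mul_cancel₀ h1t
    linear_combination (κ' t * κ r * (κ r - κ t) *
      ((if y = x₁ then (1:ℝ) else 0) - (if y = x_t then (1:ℝ) else 0))) * h1t'
end

section
/- For the masked diffusion path p_{t|1}(x|x₁) = κ_t δ_{x₁}(x) + (1−κ_t)δ_M(x) with differentiable schedule κ, the conditional rate matrix u_{t|1}(y,x|x₁) := (κ̇_t/(1−κ_t))(δ_{x₁}(y) − δ_x(y)) generates the path, i.e. for every y ∈ S and x₁ ≠ M, d/dt p_{t|1}(y|x₁) = Σ_{x ∈ S} u_{t|1}(y,x|x₁) p_{t|1}(x|x₁). -/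
/-- the conditional rate matrix
`u_{t|1}(y,x|x₁) = (κ̇_t/(1−κ_t))(δ_{x₁}(y) − δ_x(y))` generates the masked diffusion path
`p_{t|1}(x|x₁) = κ_t δ_{x₁}(x) + (1−κ_t)δ_M(x)`: the Kolmogorov forward equation
`d/dt p_{t|1}(y|x₁) = Σ_x u_{t|1}(y,x|x₁) p_{t|1}(x|x₁)` holds for all `y` and `x₁ ≠ M`. -/
theorem masked_diffusion_kfe
    {S : Type*} [Fintype S] [DecidableEq S] (M : S)
    (κ κ' : ℝ → ℝ) (hderiv : ∀ u, HasDerivAt κ (κ' u) u)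
    (hκ_mono : MonotoneOn κ (Set.Icc 0 1))
    (hκ0 : κ 0 = 0) (hκ1 : κ 1 = 1)
    (t : ℝ) (ht0 : 0 ≤ t) (ht1 : t < 1) (hκt1 : κ t < 1)
    (x₁ : S) (hx₁ : x₁ ≠ M) (y : S) :
    HasDerivAt (fun s => κ s * kdelta x₁ y + (1 - κ s) * kdelta M y)
      (∑ x : S, (κ' t / (1 - κ t)) * (kdelta x₁ y - kdelta x y) *
        (κ t * kdelta x₁ x + (1 - κ t) * kdelta M x)) t := by
  have hne : (1 : ℝ) - κ t ≠ 0 := by linarith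
  have hsum : (∑ x : S, (κ' t / (1 - κ t)) * (kdelta x₁ y - kdelta x y) *
        (κ t * kdelta x₁ x + (1 - κ t) * kdelta M x))
      = κ' t * kdelta x₁ y + (-(κ' t)) * kdelta M y := by
    have : ∀ x : S, (κ' t / (1 - κ t)) * (kdelta x₁ y - kdelta x y) *
        (κ t * kdelta x₁ x + (1 - κ t) * kdelta M x)
        = (if x = x₁ then (κ' t / (1 - κ t)) * (kdelta x₁ y - kdelta x₁ y) * κ t else 0)
          + (if x = M then (κ' t / (1 - κ t)) * (kdelta x₁ y - kdelta M y) * (1 - κ t) else 0) := by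
      intro x
      by_cases h1 : x = x₁ <;> by_cases h2 : x = M <;>
        simp_all [kdelta] <;> ring
    rw [Finset.sum_congr rfl (fun x _ => this x)]
    rw [Finset.sum_add_distrib, Finset.sum_ite_eq' Finset.univ x₁,
      Finset.sum_ite_eq' Finset.univ M]
    simp only [Finset.mem_univ, if_true]
    field_simp
    ring
  rw [hsum]
  have h := ((hderiv t).mul_const (kdelta x₁ y)).add
    (((hasDerivAt_const t (1:ℝ)).sub (hderiv t)).mul_const (kdelta M y))
  exact h.congr_deriv (by ring)
end
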